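/- Let n ∈ ℕ, let Φ : ℝ^n → ℝ be twice continuously differentiable, and let α, β > 0. Let x : ℝ → ℝ^n be twice differentiable and satisfy, for all t ∈ ℝ, the inertial gradient-like equation x''(t) + α·x'(t) + β·(D(∇Φ)(x(t)))(x'(t)) + ∇Φ(x(t)) = 0, where ∇Φ denotes the gradient of Φ and D(∇Φ)(y) the Fréchet derivative of ∇Φ at y (the Hessian operator). Define W : ℝ → ℝ by W(t) = (α·β + 1)·Φ(x(t)) + (1/2)·‖x'(t) + β·∇Φ(x(t))‖². Then for every t ∈ ℝ, W is differentiable at t with W'(t) = -α·‖x'(t)‖² - β·‖∇Φ(x(t))‖². -/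

import Mathlib

open Filter MeasureTheory

open scoped RealInnerProductSpace

theorem stmt_13 {n : ℕ} (Φ : EuclideanSpace ℝ (Fin n) → ℝ) (hΦ : ContDiff ℝ 2 Φ)
    (α β : ℝ) (hα : 0 < α) (hβ : 0 < β)
    (x x' x'' : ℝ → EuclideanSpace ℝ (Fin n))
    (hx : ∀ t : ℝ, HasDerivAt x (x' t) t)
    (hx' : ∀ t : ℝ, HasDerivAt x' (x'' t) t)
    (heq : ∀ t : ℝ,
      x'' t + α • x' t + β • (fderiv ℝ (gradient Φ) (x t)) (x' t) + gradient Φ (x t) = 0) :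
    ∀ t : ℝ,
      HasDerivAt
        (fun s => (α * β + 1) * Φ (x s) + (1 / 2) * ‖x' s + β • gradient Φ (x s)‖ ^ 2)
        (-α * ‖x' t‖ ^ 2 - β * ‖gradient Φ (x t)‖ ^ 2) t := by
  intro t
  set g := gradient Φ with hg
  -- gradient is differentiable
  have hΦd : Differentiable ℝ Φ := hΦ.differentiable two_ne_zero
  have hgd : Differentiable ℝ g := by
    have h1 : ContDiff ℝ 1 (fderiv ℝ Φ) := hΦ.fderiv_right (le_refl _)
    have : g = fun y => (InnerProductSpace.toDual ℝ _).symm (fderiv ℝ Φ y) := rfl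
    rw [this]
    exact (InnerProductSpace.toDual ℝ _).symm.differentiable.comp (h1.differentiable one_ne_zero)
  -- derivative of g ∘ x
  have hgx : HasDerivAt (fun s => g (x s)) ((fderiv ℝ g (x t)) (x' t)) t :=
    ((hgd (x t)).hasFDerivAt).comp_hasDerivAt t (hx t)
  -- derivative of Φ ∘ x
  have hΦx : HasDerivAt (fun s => Φ (x s)) (⟪g (x t), x' t⟫) t := by
    have := ((hΦd (x t)).hasGradientAt.hasFDerivAt).comp_hasDerivAt t (hx t)
    exact this
  -- velocity term
  set H := (fderiv ℝ g (x t)) (x' t) with hH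
  have hv : HasDerivAt (fun s => x' s + β • g (x s)) (x'' t + β • H) t :=
    (hx' t).add ((hgx.const_smul β))
  -- norm squared term as inner
  have hn : HasDerivAt (fun s => ‖x' s + β • g (x s)‖ ^ 2)
      (⟪x' t + β • g (x t), x'' t + β • H⟫ + ⟪x'' t + β • H, x' t + β • g (x t)⟫) t := by
    have := hv.inner ℝ hv
    simpa only [real_inner_self_eq_norm_sq] using this
  have key := (hΦx.const_mul (α * β + 1)).add (hn.const_mul (1 / 2))
  convert key using 1
  case e'_4 => rfl
  case e'_5 => rfl
  case e'_8 => rfl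
  have he : x'' t + β • H = -(α • x' t + g (x t)) := by
    have h0 := heq t
    rw [← hH] at h0
    have : x'' t + β • H + (α • x' t + g (x t)) = 0 := by
      rw [← h0]; module
    linear_combination (norm := module) this
  rw [he]
  simp only [inner_neg_right, inner_neg_left, inner_add_left, inner_add_right,
    real_inner_smul_left, real_inner_smul_right, real_inner_self_eq_norm_sq]
  rw [real_inner_comm (g (x t)) (x' t)]
  ring
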